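/- Let c₀ > 2 or c₀ < 0, set C₀ = √((c₀−2)/c₀) and α(t) = −(c₀C₀/2)(2πt+k). Then X(t) = 2 arccot(C₀ tan(α(t))) satisfies dX/dt = 2π cos X + 2π(c₀ − 1) wherever tan(α(t)) is defined. -/

import Mathlib

open Real

noncomputable def arccot (y : ℝ) : ℝ := π / 2 - Real.arctan y

theorem X_solves_ode_c0_outside (c₀ k : ℝ) (hc₀ : c₀ * (c₀ - 2) > 0)
    (C₀ : ℝ) (hC₀ : C₀ = Real.sqrt ((c₀ - 2) / c₀))
    (α : ℝ → ℝ) (hα : ∀ t, α t = -(c₀ * C₀ / 2) * (2 * π * t + k))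
    (X : ℝ → ℝ) (hX : ∀ t, X t = 2 * arccot (C₀ * Real.tan (α t))) :
    ∀ t : ℝ, Real.cos (α t) ≠ 0 →
      HasDerivAt X (2 * π * Real.cos (X t) + 2 * π * (c₀ - 1)) t := by
  intro t hcos
  have hc0 : c₀ ≠ 0 := by
    rintro rfl; simp at hc₀
  have hpos : (c₀ - 2) / c₀ > 0 := by
    rcases lt_or_gt_of_ne hc0 with h | h
    · have h2 : c₀ - 2 < 0 := by nlinarith
      exact div_pos_of_neg_of_neg h2 h
    · have h2 : c₀ - 2 > 0 := by nlinarith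
      exact div_pos h2 h
  have hC2 : C₀ ^ 2 = (c₀ - 2) / c₀ := by rw [hC₀, sq_sqrt hpos.le]
  have hkey : c₀ * C₀ ^ 2 = c₀ - 2 := by rw [hC2]; field_simp
  set y := C₀ * Real.tan (α t) with hy
  -- derivative of α
  have ha : HasDerivAt α (-(c₀ * C₀ / 2) * (2 * π)) t := by
    rw [show α = fun s => -(c₀ * C₀ / 2) * (2 * π * s + k) from funext hα]
    have h1 : HasDerivAt (fun s : ℝ => 2 * π * s + k) (2 * π) t := by
      simpa using ((hasDerivAt_id t).const_mul (2 * π)).add_const k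
    simpa using h1.const_mul (-(c₀ * C₀ / 2))
  have htan : HasDerivAt (fun s => Real.tan (α s))
      (1 / Real.cos (α t) ^ 2 * (-(c₀ * C₀ / 2) * (2 * π))) t :=
    (Real.hasDerivAt_tan hcos).comp t ha
  have harc : HasDerivAt (fun s => Real.arctan (C₀ * Real.tan (α s)))
      (1 / (1 + y ^ 2) * (C₀ * (1 / Real.cos (α t) ^ 2 * (-(c₀ * C₀ / 2) * (2 * π))))) t :=
    by have := (Real.hasDerivAt_arctan y).comp t (htan.const_mul C₀); exact this
  have hXd : HasDerivAt X
      (2 * -(1 / (1 + y ^ 2) * (C₀ * (1 / Real.cos (α t) ^ 2 * (-(c₀ * C₀ / 2) * (2 * π)))))) t := by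
    rw [show X = fun s => 2 * (π / 2 - Real.arctan (C₀ * Real.tan (α s))) from
      funext fun s => by rw [hX s, arccot]]
    exact (harc.const_sub (π / 2)).const_mul 2
  have hden : (0 : ℝ) < 1 + y ^ 2 := by positivity
  have hcosX : Real.cos (X t) = (y ^ 2 - 1) / (1 + y ^ 2) := by
    rw [hX, arccot, show (2 : ℝ) * (π / 2 - Real.arctan y) = π - 2 * Real.arctan y by ring,
      Real.cos_pi_sub, Real.cos_two_mul, Real.cos_arctan]
    rw [div_pow, one_pow, sq_sqrt (by positivity : (0:ℝ) ≤ 1 + y ^ 2)]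
    field_simp
    ring
  convert hXd using 1
  rw [hcosX]
  have hsc : Real.sin (α t) ^ 2 + Real.cos (α t) ^ 2 = 1 := Real.sin_sq_add_cos_sq _
  have hy' : y = C₀ * (Real.sin (α t) / Real.cos (α t)) := by rw [hy, Real.tan_eq_sin_div_cos]
  rw [hy'] at hden ⊢
  field_simp
  linear_combination
    (Real.sin (α t) ^ 2 - 1) * hkey +
    (c₀ - 2) * hsc
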